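/- Let M ≥ 1, N > 0, and P₁, …, P_M > 0 with total power T = ∑_j P_j. Suppose every user i splits its power with common fractions γ_k = (N/T)·(1 + T/N)^((L−k)/L)·((1 + T/N)^(1/L) − 1) for k = 1, …, L, so user i's k-th virtual user has power γ_k·P_i, and virtual user classes are decoded in order with rates r_{ik} = (1/2)·log(1 + γ_k·P_i/(T·(1 − ∑_{j<k} γ_j) − γ_k·P_i + N)). Then lim_{L→∞} ∑_{k=1}^L r_{ik} = (P_i/(2T))·log(1 + T/N) for every i. -/

import Mathlib

theorem stmt16 (M : ℕ) (hM : 1 ≤ M) (N : ℝ) (hN : 0 < N)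
    (P : Fin M → ℝ) (hP : ∀ j, 0 < P j) (i : Fin M) :
    let T : ℝ := ∑ j, P j
    let γ : ℕ → ℕ → ℝ := fun L k =>
      (N / T) * (1 + T / N) ^ (((L : ℝ) - k) / L) * ((1 + T / N) ^ ((1 : ℝ) / L) - 1)
    Filter.Tendsto
      (fun L : ℕ => ∑ k ∈ Finset.Icc 1 L,
        (1 / 2) * Real.log (1 + γ L k * P i /
          (T * (1 - ∑ j ∈ Finset.Ico 1 k, γ L j) - γ L k * P i + N)))
      Filter.atTop
      (nhds ((P i / (2 * T)) * Real.log (1 + T / N))) := by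
  intro T γ
  have hT : 0 < T := Finset.sum_pos (fun j _ => hP j) ⟨⟨0, hM⟩, Finset.mem_univ _⟩
  set p := P i with hp
  have hp0 : 0 < p := hP i
  have hpT : p ≤ T := Finset.single_le_sum (fun j _ => (hP j).le) (Finset.mem_univ i)
  set a : ℝ := 1 + T / N with ha
  have ha1 : 1 < a := by rw [ha]; nlinarith [div_pos hT hN]
  have ha0 : 0 < a := lt_trans one_pos ha1
  set t := Real.log a with ht
  have ht0 : 0 < t := Real.log_pos ha1
  set c : ℝ := 1 - p / T with hc
  have hc0 : 0 ≤ c := by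
    rw [hc]
    have : p / T ≤ 1 := (div_le_one hT).mpr hpT
    linarith
  set F : ℝ → ℝ := fun s => Real.log (1 + c * (Real.exp (t * s) - 1)) with hF
  have hF0 : F 0 = 0 := by simp [hF]
  have hderiv : HasDerivAt F (c * t) 0 := by
    have h1 : HasDerivAt (fun s : ℝ => t * s) t 0 := by
      simpa using (hasDerivAt_id (0:ℝ)).const_mul t
    have h2 := (Real.hasDerivAt_exp (t * 0)).comp 0 h1
    have h3 : HasDerivAt (fun s => 1 + c * (Real.exp (t * s) - 1))
        (c * (Real.exp (t * 0) * t)) 0 := ((h2.sub_const 1).const_mul c).const_add 1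
    have hne : (1 + c * (Real.exp (t * 0) - 1)) ≠ 0 := by simp
    have h4 := (Real.hasDerivAt_log hne).comp 0 h3
    convert h4 using 1
    all_goals first | rfl | simp
  have hslope := hasDerivAt_iff_tendsto_slope.mp hderiv
  have hseq : Filter.Tendsto (fun L : ℕ => 1 / (L : ℝ)) Filter.atTop (nhdsWithin 0 {(0:ℝ)}ᶜ) := by
    refine tendsto_nhdsWithin_of_tendsto_nhds_of_eventually_within _
      tendsto_one_div_atTop_nhds_zero_nat ?_
    filter_upwards [Filter.eventually_ge_atTop 1] with L hL
    have : (0:ℝ) < (L:ℝ) := by exact_mod_cast hL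
    simp [ne_of_gt this]
  have hmain : Filter.Tendsto
      (fun L : ℕ => (1/2) * t - (1/2) * slope F 0 (1 / (L:ℝ)))
      Filter.atTop (nhds ((1/2) * t - (1/2) * (c * t))) :=
    Filter.Tendsto.sub tendsto_const_nhds ((hslope.comp hseq).const_mul (1/2))
  have hval : (1/2) * t - (1/2) * (c * t) = p / (2 * T) * t := by
    rw [hc]; field_simp; ring
  rw [hval] at hmain
  refine hmain.congr' ?_
  filter_upwards [Filter.eventually_ge_atTop 1] with L hL
  have hL0 : (0:ℝ) < (L:ℝ) := by exact_mod_cast hL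
  have hLne : (L:ℝ) ≠ 0 := ne_of_gt hL0
  set u : ℝ := a ^ ((1:ℝ) / L) with hu
  have hu1 : 1 < u := by
    rw [hu]
    exact (Real.one_lt_rpow_iff_of_pos ha0).mpr (Or.inl ⟨ha1, by positivity⟩)
  have hu0 : 0 < u := lt_trans one_pos hu1
  have hcu : 0 < 1 + c * (u - 1) := by nlinarith [mul_nonneg hc0 (by linarith : (0:ℝ) ≤ u - 1)]
  -- sum formula
  have hS : ∀ k : ℕ, 1 ≤ k →
      ∑ j ∈ Finset.Ico 1 k, γ L j = (N / T) * (a - a ^ (((L:ℝ) - k + 1) / L)) := by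
    intro k hk
    induction k, hk using Nat.le_induction with
    | base =>
      simp only [Finset.Ico_self, Finset.sum_empty, Nat.cast_one]
      have : ((L:ℝ) - 1 + 1) / L = 1 := by field_simp; ring
      rw [this, Real.rpow_one]
      ring
    | succ k hk ih =>
      rw [Finset.sum_Ico_succ_top hk, ih]
      have hγk : γ L k = (N / T) * a ^ (((L:ℝ) - k) / L) * (u - 1) := by
        rw [hu, ha]
      have hsplit : a ^ (((L:ℝ) - k + 1) / L) = a ^ (((L:ℝ) - k) / L) * u := by
        rw [hu, ← Real.rpow_add ha0]
        congr 1
        field_simp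
      have hcast : ((k:ℝ) + 1) = ((k+1 : ℕ) : ℝ) := by push_cast; ring
      rw [hγk, hsplit]
      push_cast
      ring
  -- per-term value
  have hterm : ∀ k ∈ Finset.Icc 1 L,
      (1 / 2) * Real.log (1 + γ L k * p /
          (T * (1 - ∑ j ∈ Finset.Ico 1 k, γ L j) - γ L k * p + N))
        = (1/2) * (t / L - F (1 / (L:ℝ))) := by
    intro k hk
    obtain ⟨hk1, hkL⟩ := Finset.mem_Icc.mp hk
    set b : ℝ := a ^ (((L:ℝ) - k) / L) with hb
    have hb0 : 0 < b := Real.rpow_pos_of_pos ha0 _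
    have hγk : γ L k = (N / T) * b * (u - 1) := by rw [hb, hu, ha]
    have hsplit : a ^ (((L:ℝ) - k + 1) / L) = b * u := by
      rw [hb, hu, ← Real.rpow_add ha0]
      congr 1
      field_simp
    have hD : T * (1 - ∑ j ∈ Finset.Ico 1 k, γ L j) - γ L k * p + N
        = N * b * (1 + c * (u - 1)) := by
      rw [hS k hk1, hsplit, hγk, hc, ha]
      field_simp
      ring
    have hDpos : 0 < N * b * (1 + c * (u - 1)) := by positivity
    have hTne : T ≠ 0 := ne_of_gt hT
    have hDne : (N * b * (1 + c * (u - 1))) ≠ 0 := ne_of_gt hDpos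
    have hnum : N * b * (1 + c * (u - 1)) + N / T * b * (u - 1) * p = N * b * u := by
      have hcc : 1 + c * (u - 1) = u - p / T * (u - 1) := by rw [hc]; ring
      rw [hcc]
      field_simp
      ring
    have harg : 1 + γ L k * p / (N * b * (1 + c * (u - 1))) = u / (1 + c * (u - 1)) := by
      rw [hγk, add_div' _ _ _ hDne, one_mul, hnum,
        show N * b * u = (N * b) * u by ring, show N * b * (1 + c * (u - 1)) = (N * b) * (1 + c * (u - 1)) by ring]
      exact mul_div_mul_left _ _ (by positivity)
    rw [hD, harg, Real.log_div (ne_of_gt hu0) (ne_of_gt hcu)]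
    have hlogu : Real.log u = t / L := by
      rw [hu, Real.log_rpow ha0, ← ht]
      ring
    have huexp : u = Real.exp (t * (1 / L)) := by
      rw [hu, Real.rpow_def_of_pos ha0, ← ht]
    have hFval : F (1 / (L:ℝ)) = Real.log (1 + c * (u - 1)) := by
      rw [hF]
      simp only []
      rw [← huexp]
    rw [hlogu, hFval]
  rw [Finset.sum_congr rfl hterm, Finset.sum_const, Nat.card_Icc]
  simp only [Nat.add_sub_cancel, nsmul_eq_mul]
  have hslopeval : slope F 0 (1 / (L:ℝ)) = (L:ℝ) * F (1 / (L:ℝ)) := by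
    rw [slope_def_field, hF0]
    field_simp
    ring
  rw [hslopeval]
  have hG : ∀ G : ℝ, (L:ℝ) * ((1:ℝ)/2 * (t / L - G)) = 1/2 * t - 1/2 * ((L:ℝ) * G) := by
    intro G; field_simp
  rw [hG]
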